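/- Let F : ℕ → ℂ be multiplicative and not identically zero, and let G_F be its canonical Ramanujan coefficient. Then: G_F is multiplicative; for every a ∈ ℕ the Ramanujan series R_{G_F}(a) converges with R_{G_F}(a) = Σ_{d ∣ a·rad(a)} G_F(d)·c_d(a) = F(a); for every a ∈ ℕ the coprime series S_{G_F}(a) converges with S_{G_F}(a) = 1. Moreover G_F is the unique such function: if G : ℕ → ℂ is multiplicative, R_G(a) converges with R_G(a) = F(a) for all a ∈ ℕ, and S_G(a) converges with S_G(a) = 1 for all a ∈ ℕ, then G = G_F. -/

import Mathlib

open Filter Finset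

noncomputable def mu (n : ℕ) : ℂ := ((ArithmeticFunction.moebius n : ℤ) : ℂ)

/-- Ramanujan sum `c_q(a) = ∑_{d ∣ gcd(q,a)} d · μ(q/d)` (Kluyver's formula). -/
noncomputable def cR (q a : ℕ) : ℂ :=
  ∑ d ∈ (Nat.gcd q a).divisors, (d : ℂ) * mu (q / d)

/-- Partial sum of the Ramanujan series `R_G(a,x) = ∑_{q ≤ x} G(q) c_q(a)`. -/
noncomputable def RS (G : ℕ → ℂ) (a : ℕ) (x : ℝ) : ℂ :=
  ∑ q ∈ Finset.Icc 1 ⌊x⌋₊, G q * cR q a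

/-- Partial sum of the coprime series `S_G(a,x) = ∑_{r ≤ x, (r,a)=1} G(r) μ(r)`. -/
noncomputable def SS (G : ℕ → ℂ) (a : ℕ) (x : ℝ) : ℂ :=
  ∑ r ∈ (Finset.Icc 1 ⌊x⌋₊).filter fun r => Nat.gcd r a = 1, G r * mu r

/-- Partial sum of the Lucht series `L_G(d,x) = ∑_{K ≤ x} μ(K) G(dK)`. -/
noncomputable def LS (G : ℕ → ℂ) (d : ℕ) (x : ℝ) : ℂ :=
  ∑ K ∈ Finset.Icc 1 ⌊x⌋₊, mu K * G (d * K)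

def RTendsto (G : ℕ → ℂ) (a : ℕ) (L : ℂ) : Prop :=
  Tendsto (fun x : ℝ => RS G a x) atTop (nhds L)

def RConv (G : ℕ → ℂ) (a : ℕ) : Prop := ∃ L, RTendsto G a L

def STendsto (G : ℕ → ℂ) (a : ℕ) (L : ℂ) : Prop :=
  Tendsto (fun x : ℝ => SS G a x) atTop (nhds L)

def SConv (G : ℕ → ℂ) (a : ℕ) : Prop := ∃ L, STendsto G a L

def LTendsto (G : ℕ → ℂ) (d : ℕ) (L : ℂ) : Prop :=
  Tendsto (fun x : ℝ => LS G d x) atTop (nhds L)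

def LConv (G : ℕ → ℂ) (d : ℕ) : Prop := ∃ L, LTendsto G d L

/-- `G` is multiplicative: `G(ab) = G(a)G(b)` for coprime positive `a, b`. -/
def IsMult (G : ℕ → ℂ) : Prop :=
  ∀ a b : ℕ, 0 < a → 0 < b → Nat.Coprime a b → G (a * b) = G a * G b

/-- `G` is completely multiplicative. -/
def IsCM (G : ℕ → ℂ) : Prop :=
  ∀ a b : ℕ, 0 < a → 0 < b → G (a * b) = G a * G b

/-- The completely multiplicative index `w_{p,G}`: the largest `w ∈ ℕ` with
`G(p^k) = G(p)^k` for all `1 ≤ k ≤ w`, and `⊤` if this holds for all `k`. -/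
noncomputable def cmIndex (G : ℕ → ℂ) (p : ℕ) : ℕ∞ :=
  ⨆ w ∈ {n : ℕ | ∀ k : ℕ, 1 ≤ k → k ≤ n → G (p ^ k) = G p ^ k}, (w : ℕ∞)

/-- The transparency index `v_{p,G}`: least `K ≥ 0` with `G(p^{K+1}) ≠ 1`, or `⊤`. -/
noncomputable def trIdx (G : ℕ → ℂ) (p : ℕ) : ℕ∞ :=
  ⨅ K ∈ {K : ℕ | G (p ^ (K + 1)) ≠ 1}, (K : ℕ∞)

/-- A prime `p` is bad for `G` iff `1 ≤ |G(p)| ≤ p`. -/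
def IsBad (G : ℕ → ℂ) (p : ℕ) : Prop :=
  1 ≤ ‖G p‖ ∧ ‖G p‖ ≤ p

def IsHyperbad (G : ℕ → ℂ) (p : ℕ) : Prop :=
  p.Prime ∧ IsBad G p ∧ cmIndex G p = ⊤

def IsSimplyBad (G : ℕ → ℂ) (p : ℕ) : Prop :=
  p.Prime ∧ IsBad G p ∧ cmIndex G p ≠ ⊤

def IsSimplyTransparent (G : ℕ → ℂ) (p : ℕ) : Prop :=
  p.Prime ∧ G p = 1 ∧ cmIndex G p ≠ ⊤

/-- The Ramanujan conductor `N(G) = ∏_{p simply bad} p^{w_{p,G}}`. -/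
noncomputable def ramCond (G : ℕ → ℂ) : ℕ :=
  ∏ᶠ p ∈ {p : ℕ | IsSimplyBad G p}, p ^ (cmIndex G p).toNat

/-- The transparency conductor `N_T(G) = ∏_{p simply transparent} p^{v_{p,G}}`. -/
noncomputable def transpCond (G : ℕ → ℂ) : ℕ :=
  ∏ᶠ p ∈ {p : ℕ | IsSimplyTransparent G p}, p ^ (trIdx G p).toNat

/-- The squarefree radical of `n`. -/
def rad (n : ℕ) : ℕ := ∏ p ∈ n.primeFactors, p

/-- Euler–Ramanujan factor `E_G(a) = ∑_{d ∣ a·rad a} G(d) c_d(a)`. -/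
noncomputable def EG (G : ℕ → ℂ) (a : ℕ) : ℂ := ∑ d ∈ (a * rad a).divisors, G d * cR d a

/-- `C_G(a) = ∑_{d ∣ a} G(d) μ(d)`. -/
noncomputable def CGsum (G : ℕ → ℂ) (a : ℕ) : ℂ := ∑ d ∈ a.divisors, G d * mu d

/-- `D_G(a) = ∑_{d ∣ a} G(d) d`. -/
noncomputable def DGsum (G : ℕ → ℂ) (a : ℕ) : ℂ := ∑ d ∈ a.divisors, G d * (d : ℂ)

/-- `U_G(a) = ∑_{d ∣ a} μ(d) G(da)`. -/
noncomputable def UGsum (G : ℕ → ℂ) (a : ℕ) : ℂ := ∑ d ∈ a.divisors, mu d * G (d * a)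

/-- Eratosthenes transform `F' = F ∗ μ`. -/
noncomputable def eratos (F : ℕ → ℂ) (n : ℕ) : ℂ := ∑ d ∈ n.divisors, F d * mu (n / d)

/-- The canonical Ramanujan coefficient of `F`:
`G_F(q) = ∏_{p ∣ q} (1 - ∑_{K=0}^{v_p(q)-1} F'(p^K)/p^K)`. -/
noncomputable def canonCoeff (F : ℕ → ℂ) (q : ℕ) : ℂ :=
  ∏ p ∈ q.primeFactors,
    (1 - ∑ K ∈ Finset.range (q.factorization p), eratos F (p ^ K) / ((p : ℂ) ^ K))

/-- The opacity core `H_G(q) = G(q·N_T(G))·μ(q)²`. -/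
noncomputable def opacityCore (G : ℕ → ℂ) (q : ℕ) : ℂ :=
  G (q * transpCond G) * mu q ^ 2


/-! ### Auxiliary lemmas -/

section Aux

lemma mu_one : mu 1 = 1 := by simp [mu]

lemma mu_prime {p : ℕ} (hp : p.Prime) : mu p = -1 := by
  simp [mu, ArithmeticFunction.moebius_apply_prime hp]

lemma mu_zero_of_not_squarefree {n : ℕ} (h : ¬ Squarefree n) : mu n = 0 := by
  simp [mu, ArithmeticFunction.moebius_eq_zero_of_not_squarefree h]

lemma mu_mul {m n : ℕ} (h : Nat.Coprime m n) : mu (m * n) = mu m * mu n := by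
  simp only [mu, ArithmeticFunction.isMultiplicative_moebius.map_mul_of_coprime h]
  push_cast
  ring

lemma rad_pos (n : ℕ) : 0 < rad n :=
  Finset.prod_pos fun p hp => (Nat.prime_of_mem_primeFactors hp).pos

lemma rad_dvd (n : ℕ) : rad n ∣ n := Nat.prod_primeFactors_dvd n

lemma squarefree_prod_primes {s : Finset ℕ} (hs : ∀ p ∈ s, p.Prime) :
    Squarefree (∏ p ∈ s, p) := by
  classical
  induction s using Finset.induction with
  | empty => simpa using squarefree_one
  | @insert a s ha ih =>
    rw [Finset.prod_insert ha]
    have hap : a.Prime := hs a (Finset.mem_insert_self a s)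
    have hcop : Nat.Coprime a (∏ p ∈ s, p) :=
      Nat.Coprime.prod_right fun q hq =>
        (Nat.coprime_primes hap (hs q (Finset.mem_insert_of_mem hq))).2
          (fun h => ha (h ▸ hq))
    exact (Nat.squarefree_mul hcop).2 ⟨hap.squarefree, ih fun p hp => hs p (Finset.mem_insert_of_mem hp)⟩

lemma squarefree_rad (n : ℕ) : Squarefree (rad n) :=
  squarefree_prod_primes fun _ hp => Nat.prime_of_mem_primeFactors hp

lemma primeFactors_rad (n : ℕ) : (rad n).primeFactors = n.primeFactors :=
  Nat.primeFactors_prod fun _ hp => Nat.prime_of_mem_primeFactors hp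

lemma rad_one : rad 1 = 1 := by simp [rad]

lemma rad_prime_pow {p : ℕ} (hp : p.Prime) {v : ℕ} (hv : 0 < v) : rad (p ^ v) = p := by
  unfold rad
  rw [Nat.primeFactors_pow _ hv.ne', hp.primeFactors]
  simp

end Aux


section Aux2

variable {F : ℕ → ℂ}

lemma F_one (hFmult : IsMult F) (hF : ∃ a : ℕ, 0 < a ∧ F a ≠ 0) : F 1 = 1 := by
  obtain ⟨a, ha, hFa⟩ := hF
  have h1 := hFmult a 1 ha one_pos (Nat.coprime_one_right a)
  rw [mul_one] at h1
  have : F a * 1 = F a * F 1 := by rw [mul_one]; exact h1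
  exact (mul_left_cancel₀ hFa this).symm

lemma eratos_one (F : ℕ → ℂ) : eratos F 1 = F 1 := by
  simp [eratos, mu]

lemma canonCoeff_one (F : ℕ → ℂ) : canonCoeff F 1 = 1 := by simp [canonCoeff]

lemma canonCoeff_prime_pow {p : ℕ} (hp : p.Prime) {v : ℕ} (hv : 0 < v) :
    canonCoeff F (p ^ v) = 1 - ∑ K ∈ Finset.range v, eratos F (p ^ K) / ((p : ℂ) ^ K) := by
  unfold canonCoeff
  rw [Nat.primeFactors_pow _ hv.ne', hp.primeFactors, Finset.prod_singleton,
    hp.factorization_pow, Finsupp.single_eq_same]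

lemma canonCoeff_mult (F : ℕ → ℂ) : IsMult (canonCoeff F) := by
  intro a b ha hb hab
  have hd := Nat.Coprime.disjoint_primeFactors hab
  unfold canonCoeff
  rw [Nat.Coprime.primeFactors_mul hab, Finset.prod_union hd]
  congr 1
  · refine Finset.prod_congr rfl fun p hp => ?_
    have hb0 : b.factorization p = 0 := by
      have hnb : p ∉ b.primeFactors := Finset.disjoint_left.mp hd hp
      rwa [← Nat.support_factorization, Finsupp.notMem_support_iff] at hnb
    rw [Nat.factorization_mul ha.ne' hb.ne', Finsupp.add_apply, hb0, add_zero]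
  · refine Finset.prod_congr rfl fun p hp => ?_
    have ha0 : a.factorization p = 0 := by
      have hna : p ∉ a.primeFactors := Finset.disjoint_right.mp hd hp
      rwa [← Nat.support_factorization, Finsupp.notMem_support_iff] at hna
    rw [Nat.factorization_mul ha.ne' hb.ne', Finsupp.add_apply, ha0, zero_add]

lemma canonCoeff_eq_zero (hF1 : F 1 = 1) {p q : ℕ}
    (hq : q.factorization p = 1) : canonCoeff F q = 0 := by
  have hpq : p ∈ q.primeFactors := by
    rw [← Nat.support_factorization, Finsupp.mem_support_iff, hq]
    exact one_ne_zero
  refine Finset.prod_eq_zero hpq ?_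
  rw [hq, Finset.sum_range_one, pow_zero, pow_zero, eratos_one, hF1]
  norm_num

lemma cR_eq_zero {q a p : ℕ} (hp : p.Prime) (ha : a ≠ 0) (hq0 : q ≠ 0)
    (h : a.factorization p + 2 ≤ q.factorization p) : cR q a = 0 := by
  unfold cR
  refine Finset.sum_eq_zero fun d hd => ?_
  obtain ⟨hdvd, _⟩ := Nat.mem_divisors.mp hd
  have hd0 : d ≠ 0 := (Nat.pos_of_mem_divisors hd).ne'
  have hdq : d ∣ q := hdvd.trans (Nat.gcd_dvd_left q a)
  have hda : d ∣ a := hdvd.trans (Nat.gcd_dvd_right q a)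
  have h1 : d.factorization p ≤ a.factorization p :=
    ((Nat.factorization_le_iff_dvd hd0 ha).2 hda) p
  have hdiv0 : q / d ≠ 0 := Nat.div_ne_zero_iff_of_dvd hdq |>.2 ⟨hq0, hd0⟩
  have h2 : 2 ≤ (q / d).factorization p := by
    rw [Nat.factorization_div hdq, Finsupp.tsub_apply]
    omega
  have hp2 : p ^ 2 ∣ q / d := (Nat.Prime.pow_dvd_iff_le_factorization hp hdiv0).2 h2
  have hns : ¬ Squarefree (q / d) := fun hs => hp.not_isUnit (hs p (by rwa [← sq]))
  rw [mu_zero_of_not_squarefree hns, mul_zero]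

end Aux2


section Aux3

variable {F : ℕ → ℂ}

lemma factorization_rad_eq (a : ℕ) (p : ℕ) :
    (rad a).factorization p = if p ∈ a.primeFactors then 1 else 0 := by
  split_ifs with hmem
  · refine le_antisymm ((squarefree_rad a).natFactorization_le_one p) ?_
    have : p ∈ (rad a).primeFactors := by rwa [primeFactors_rad]
    rw [← Nat.support_factorization, Finsupp.mem_support_iff] at this
    omega
  · have : p ∉ (rad a).primeFactors := by rwa [primeFactors_rad]
    rwa [← Nat.support_factorization, Finsupp.notMem_support_iff] at this

lemma term_vanish (hF1 : F 1 = 1) {a q : ℕ} (ha : 0 < a) (hq : 0 < q)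
    (hndvd : ¬ q ∣ a * rad a) : canonCoeff F q * cR q a = 0 := by
  have hM : a * rad a ≠ 0 := Nat.mul_ne_zero ha.ne' (rad_pos a).ne'
  obtain ⟨p, hple⟩ : ∃ p, ¬ q.factorization p ≤ (a * rad a).factorization p := by
    by_contra hc
    push_neg at hc
    exact hndvd ((Nat.factorization_le_iff_dvd hq.ne' hM).1 fun p => hc p)
  push_neg at hple
  have hp : p.Prime := by
    by_contra hnp
    rw [Nat.factorization_eq_zero_of_not_prime q hnp] at hple
    omega
  have hfM : (a * rad a).factorization p
      = a.factorization p + (if p ∈ a.primeFactors then 1 else 0) := by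
    rw [Nat.factorization_mul ha.ne' (rad_pos a).ne', Finsupp.add_apply, factorization_rad_eq]
  rcases le_or_gt (a.factorization p + 2) (q.factorization p) with h2 | h2
  · rw [cR_eq_zero hp ha.ne' hq.ne' h2, mul_zero]
  · have hnotmem : p ∉ a.primeFactors := by
      intro hmem
      rw [hfM, if_pos hmem] at hple
      omega
    have ha0 : a.factorization p = 0 := by
      rwa [← Nat.support_factorization, Finsupp.notMem_support_iff] at hnotmem
    have hq1 : q.factorization p = 1 := by
      rw [hfM, if_neg hnotmem, ha0] at hple
      omega
    rw [canonCoeff_eq_zero hF1 hq1, zero_mul]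

lemma RS_canon_eventually (hF1 : F 1 = 1) {a : ℕ} (ha : 0 < a) {x : ℝ}
    (hx : ((a * rad a : ℕ) : ℝ) ≤ x) :
    RS (canonCoeff F) a x = ∑ d ∈ (a * rad a).divisors, canonCoeff F d * cR d a := by
  unfold RS
  symm
  apply Finset.sum_subset
  · intro d hd
    rw [Finset.mem_Icc]
    refine ⟨Nat.pos_of_mem_divisors hd, ?_⟩
    exact le_trans (Nat.le_of_dvd (Nat.pos_of_ne_zero (Nat.mul_ne_zero ha.ne' (rad_pos a).ne'))
      (Nat.mem_divisors.mp hd).1) (Nat.le_floor hx)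
  · intro q hq hnq
    refine term_vanish hF1 ha (Finset.mem_Icc.mp hq).1 ?_
    intro hdvd
    exact hnq (Nat.mem_divisors.mpr ⟨hdvd, Nat.mul_ne_zero ha.ne' (rad_pos a).ne'⟩)

lemma SS_canon (hF1 : F 1 = 1) (a : ℕ) {x : ℝ} (hx : 1 ≤ x) :
    SS (canonCoeff F) a x = 1 := by
  unfold SS
  rw [Finset.sum_eq_single 1]
  · rw [canonCoeff_one, mu_one, one_mul]
  · intro r hr hne
    rcases em (Squarefree r) with hs | hs
    · have hr1 : 1 ≤ r := (Finset.mem_Icc.mp (Finset.mem_filter.mp hr).1).1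
      obtain ⟨p, hp, hpr⟩ := Nat.exists_prime_and_dvd hne
      have hfp : r.factorization p = 1 :=
        le_antisymm (hs.natFactorization_le_one p)
          ((Nat.Prime.factorization_pos_of_dvd hp (by omega) hpr))
      rw [canonCoeff_eq_zero hF1 hfp, zero_mul]
    · rw [mu_zero_of_not_squarefree hs, mul_zero]
  · intro h1
    exfalso
    apply h1
    rw [Finset.mem_filter, Finset.mem_Icc]
    exact ⟨⟨le_refl 1, Nat.le_floor (by exact_mod_cast hx)⟩, Nat.gcd_one_left a⟩

lemma STendsto_canon (hF1 : F 1 = 1) (a : ℕ) : STendsto (canonCoeff F) a 1 := by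
  unfold STendsto
  refine Tendsto.congr' ?_ tendsto_const_nhds
  filter_upwards [eventually_ge_atTop (1 : ℝ)] with x hx
  exact (SS_canon hF1 a hx).symm

lemma RTendsto_canon_EG (hF1 : F 1 = 1) {a : ℕ} (ha : 0 < a) :
    _root_.RTendsto (canonCoeff F) a (∑ d ∈ (a * rad a).divisors, canonCoeff F d * cR d a) := by
  unfold _root_.RTendsto
  refine Tendsto.congr' ?_ tendsto_const_nhds
  filter_upwards [eventually_ge_atTop ((a * rad a : ℕ) : ℝ)] with x hx
  exact (RS_canon_eventually hF1 ha hx).symm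

end Aux3


section IdentityR

/-- Finite identity: `∑_{q ≤ N} G(q) c_q(a) = ∑_{d ∣ a} d ∑_{K ≤ N/d} μ(K) G(dK)`. -/
lemma RS_split (G : ℕ → ℂ) {a : ℕ} (ha : 0 < a) (N : ℕ) :
    ∑ q ∈ Finset.Icc 1 N, G q * cR q a
      = ∑ d ∈ a.divisors, (d : ℂ) * ∑ K ∈ Finset.Icc 1 (N / d), mu K * G (d * K) := by
  have step1 : ∀ q ∈ Finset.Icc 1 N, G q * cR q a
      = ∑ d ∈ a.divisors, if d ∣ q then (d : ℂ) * (mu (q / d) * G q) else 0 := by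
    intro q hq
    have hq1 : 0 < q := (Finset.mem_Icc.mp hq).1
    unfold cR
    have hgcd : (Nat.gcd q a).divisors = a.divisors.filter (· ∣ q) := by
      ext d
      simp only [Nat.mem_divisors, Finset.mem_filter, Nat.dvd_gcd_iff]
      constructor
      · rintro ⟨⟨h1, h2⟩, -⟩
        exact ⟨⟨h2, ha.ne'⟩, h1⟩
      · rintro ⟨⟨h2, -⟩, h1⟩
        exact ⟨⟨h1, h2⟩, Nat.gcd_ne_zero_left hq1.ne'⟩
    rw [hgcd, Finset.mul_sum, Finset.sum_filter]
    apply Finset.sum_congr rfl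
    intro d hd
    split_ifs with h
    · ring
    · rfl
  rw [Finset.sum_congr rfl step1, Finset.sum_comm]
  apply Finset.sum_congr rfl
  intro d hd
  have hd0 : 0 < d := Nat.pos_of_mem_divisors hd
  rw [← Finset.sum_filter, Finset.mul_sum]
  refine Finset.sum_nbij' (fun q => q / d) (fun K => d * K) ?_ ?_ ?_ ?_ ?_
  · intro q hq
    simp only [Finset.mem_filter, Finset.mem_Icc] at hq
    obtain ⟨⟨h1, h2⟩, hdq⟩ := hq
    rw [Finset.mem_Icc]
    constructor
    · exact (Nat.one_le_div_iff hd0).2 (Nat.le_of_dvd (by omega) hdq)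
    · exact Nat.div_le_div_right h2
  · intro K hK
    rw [Finset.mem_Icc] at hK
    simp only [Finset.mem_filter, Finset.mem_Icc]
    refine ⟨⟨Nat.one_le_iff_ne_zero.2 (Nat.mul_ne_zero hd0.ne' (by omega)), ?_⟩, Dvd.intro K rfl⟩
    rw [mul_comm]
    exact (Nat.le_div_iff_mul_le hd0).1 hK.2
  · intro q hq
    simp only [Finset.mem_filter] at hq
    exact Nat.mul_div_cancel' hq.2
  · intro K hK
    exact Nat.mul_div_cancel_left K hd0
  · intro q hq
    simp only [Finset.mem_filter] at hq
    rw [Nat.mul_div_cancel' hq.2]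

lemma RS_eq (G : ℕ → ℂ) {a : ℕ} (ha : 0 < a) (x : ℝ) :
    RS G a x = ∑ d ∈ a.divisors, (d : ℂ) * LS G d (x / (d : ℝ)) := by
  unfold RS LS
  rw [RS_split G ha ⌊x⌋₊]
  apply Finset.sum_congr rfl
  intro d hd
  rw [Nat.floor_div_natCast]

end IdentityR


section IdentityL

/-- Finite identity: `∑_{K ≤ N} μ(K) G(dK) = ∑_{t ∣ rad m} μ(t) G(dt) ∑_{r ≤ N/t, (r,m)=1} G(r) μ(r)`
for multiplicative `G`, where every number coprime to `m` is coprime to `d`. -/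
lemma LS_split (G : ℕ → ℂ) (hG : IsMult G) {d m : ℕ} (hd : 0 < d) (hm : 0 < m)
    (hdm : ∀ r : ℕ, Nat.Coprime r m → Nat.Coprime r d) (N : ℕ) :
    ∑ K ∈ Finset.Icc 1 N, mu K * G (d * K)
      = ∑ t ∈ (rad m).divisors, mu t * G (d * t) *
          ∑ r ∈ (Finset.Icc 1 (N / t)).filter (fun r => Nat.gcd r m = 1), G r * mu r := by
  classical
  have hRsf : Squarefree (rad m) := squarefree_rad m
  have hR0 : rad m ≠ 0 := (rad_pos m).ne'
  have hcopR : ∀ r : ℕ, Nat.Coprime r m → Nat.Coprime r (rad m) :=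
    fun r h => Nat.Coprime.coprime_dvd_right (rad_dvd m) h
  -- restrict LHS to squarefree K
  rw [← Finset.sum_filter_of_ne (p := fun K => Squarefree K) (fun K _ hK => by
    by_contra hs
    exact hK (by rw [mu_zero_of_not_squarefree hs, zero_mul]))]
  -- restrict RHS inner sums to squarefree r
  have hinner : ∀ t ∈ (rad m).divisors,
      mu t * G (d * t) *
        (∑ r ∈ (Finset.Icc 1 (N / t)).filter (fun r => Nat.gcd r m = 1), G r * mu r)
      = ∑ r ∈ (Finset.Icc 1 (N / t)).filter (fun r => Nat.gcd r m = 1 ∧ Squarefree r),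
          mu t * G (d * t) * (G r * mu r) := by
    intro t ht
    rw [Finset.mul_sum, ← Finset.filter_filter]
    refine (Finset.sum_filter_of_ne fun r _ hr => ?_).symm
    by_contra hs
    exact hr (by rw [mu_zero_of_not_squarefree hs, mul_zero, mul_zero])
  rw [Finset.sum_congr rfl hinner, Finset.sum_sigma']
  -- the bijection K ↦ (gcd K (rad m), K / gcd K (rad m))
  refine Finset.sum_nbij' (fun K => ⟨Nat.gcd K (rad m), K / Nat.gcd K (rad m)⟩)
    (fun x => x.1 * x.2) ?_ ?_ ?_ ?_ ?_
  · -- forward membership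
    intro K hK
    simp only [Finset.mem_filter, Finset.mem_Icc] at hK
    obtain ⟨⟨hK1, hKN⟩, hsfK⟩ := hK
    set t := Nat.gcd K (rad m) with htdef
    have htK : t ∣ K := Nat.gcd_dvd_left K (rad m)
    have htR : t ∣ rad m := Nat.gcd_dvd_right K (rad m)
    have htpos : 0 < t := Nat.gcd_pos_of_pos_left (rad m) (by omega)
    have hrdvd : K / t ∣ K := Nat.div_dvd_of_dvd htK
    have hrm : Nat.Coprime (K / t) m := by
      by_contra hc
      obtain ⟨p, hp, hpr, hpm⟩ := Nat.Prime.not_coprime_iff_dvd.1 hc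
      have hpR : p ∣ rad m :=
        Finset.dvd_prod_of_mem _ (Nat.mem_primeFactors.2 ⟨hp, hpm, hm.ne'⟩)
      have hpK : p ∣ K := hpr.trans hrdvd
      have hpt : p ∣ t := Nat.dvd_gcd hpK hpR
      have : p * p ∣ K := by
        calc p * p ∣ t * (K / t) := mul_dvd_mul hpt hpr
        _ = K := Nat.mul_div_cancel' htK
      exact hp.not_isUnit (hsfK p this)
    simp only [Finset.mem_sigma, Finset.mem_filter, Finset.mem_Icc, Nat.mem_divisors]
    refine ⟨⟨htR, hR0⟩, ⟨⟨?_, Nat.div_le_div_right hKN⟩, hrm, hsfK.squarefree_of_dvd hrdvd⟩⟩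
    exact (Nat.one_le_div_iff htpos).2 (Nat.le_of_dvd (by omega) htK)
  · -- backward membership
    rintro ⟨t, r⟩ hx
    simp only [Finset.mem_sigma, Finset.mem_filter, Finset.mem_Icc, Nat.mem_divisors] at hx
    obtain ⟨⟨htR, -⟩, ⟨⟨hr1, hrN⟩, hrm, hsfr⟩⟩ := hx
    have htpos : 0 < t := Nat.pos_of_dvd_of_pos htR (rad_pos m)
    have hcoprt : Nat.Coprime t r :=
      (Nat.Coprime.coprime_dvd_right htR (hcopR r hrm)).symm
    simp only [Finset.mem_filter, Finset.mem_Icc]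
    refine ⟨⟨?_, ?_⟩, (Nat.squarefree_mul hcoprt).2 ⟨hRsf.squarefree_of_dvd htR, hsfr⟩⟩
    · exact Nat.one_le_iff_ne_zero.2 (Nat.mul_ne_zero htpos.ne' (by omega))
    · rw [mul_comm]
      exact (Nat.le_div_iff_mul_le htpos).1 hrN
  · -- left inverse
    intro K hK
    exact Nat.mul_div_cancel' (Nat.gcd_dvd_left K (rad m))
  · -- right inverse
    rintro ⟨t, r⟩ hx
    simp only [Finset.mem_sigma, Finset.mem_filter, Finset.mem_Icc, Nat.mem_divisors] at hx
    obtain ⟨⟨htR, -⟩, ⟨⟨hr1, hrN⟩, hrm, hsfr⟩⟩ := hx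
    have htpos : 0 < t := Nat.pos_of_dvd_of_pos htR (rad_pos m)
    have h1 : Nat.gcd (t * r) (rad m) = t := by
      rw [Nat.Coprime.gcd_mul_right_cancel t (hcopR r hrm), Nat.gcd_eq_left htR]
    dsimp only
    rw [h1, Nat.mul_div_cancel_left r htpos]
  · -- values agree
    intro K hK
    simp only [Finset.mem_filter, Finset.mem_Icc] at hK
    obtain ⟨⟨hK1, hKN⟩, hsfK⟩ := hK
    set t := Nat.gcd K (rad m) with htdef
    have htK : t ∣ K := Nat.gcd_dvd_left K (rad m)
    have htR : t ∣ rad m := Nat.gcd_dvd_right K (rad m)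
    have htpos : 0 < t := Nat.gcd_pos_of_pos_left (rad m) (by omega)
    have hrdvd : K / t ∣ K := Nat.div_dvd_of_dvd htK
    have hrpos : 0 < K / t := (Nat.one_le_div_iff htpos).2 (Nat.le_of_dvd (by omega) htK)
    have hrm : Nat.Coprime (K / t) m := by
      by_contra hc
      obtain ⟨p, hp, hpr, hpm⟩ := Nat.Prime.not_coprime_iff_dvd.1 hc
      have hpR : p ∣ rad m :=
        Finset.dvd_prod_of_mem _ (Nat.mem_primeFactors.2 ⟨hp, hpm, hm.ne'⟩)
      have hpK : p ∣ K := hpr.trans hrdvd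
      have hpt : p ∣ t := Nat.dvd_gcd hpK hpR
      have : p * p ∣ K := by
        calc p * p ∣ t * (K / t) := mul_dvd_mul hpt hpr
        _ = K := Nat.mul_div_cancel' htK
      exact hp.not_isUnit (hsfK p this)
    have hcoprt : Nat.Coprime t (K / t) :=
      (Nat.Coprime.coprime_dvd_right htR (hcopR _ hrm)).symm
    have hKeq : K = t * (K / t) := (Nat.mul_div_cancel' htK).symm
    have hmuK : mu K = mu t * mu (K / t) := by
      conv_lhs => rw [hKeq]
      exact mu_mul hcoprt
    have hGK : G (d * K) = G (d * t) * G (K / t) := by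
      conv_lhs => rw [hKeq, ← mul_assoc]
      refine hG (d * t) (K / t) (by positivity) hrpos ?_
      exact Nat.Coprime.mul ((hdm _ hrm).symm) hcoprt
    rw [hmuK, hGK]
    ring

end IdentityL


section Limits

lemma LS_eq (G : ℕ → ℂ) (hG : IsMult G) {d m : ℕ} (hd : 0 < d) (hm : 0 < m)
    (hdm : ∀ r : ℕ, Nat.Coprime r m → Nat.Coprime r d) (x : ℝ) :
    LS G d x = ∑ t ∈ (rad m).divisors, mu t * G (d * t) * SS G m (x / (t : ℝ)) := by
  unfold LS SS
  rw [LS_split G hG hd hm hdm ⌊x⌋₊]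
  exact Finset.sum_congr rfl fun t ht => by rw [Nat.floor_div_natCast]

lemma tendsto_div_nat_atTop {t : ℕ} (ht : 0 < t) :
    Tendsto (fun x : ℝ => x / (t : ℝ)) atTop atTop :=
  tendsto_id.atTop_div_const (by positivity)

lemma LTendsto_of_S (G : ℕ → ℂ) (hG : IsMult G) {d m : ℕ} (hd : 0 < d) (hm : 0 < m)
    (hdm : ∀ r : ℕ, Nat.Coprime r m → Nat.Coprime r d) (hS : STendsto G m 1) :
    LTendsto G d (∑ t ∈ (rad m).divisors, mu t * G (d * t)) := by
  unfold LTendsto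
  have h2 : Tendsto (fun x : ℝ => ∑ t ∈ (rad m).divisors, mu t * G (d * t) * SS G m (x / (t : ℝ)))
      atTop (nhds (∑ t ∈ (rad m).divisors, mu t * G (d * t) * 1)) := by
    refine tendsto_finset_sum _ fun t ht => ?_
    exact Tendsto.const_mul _ (hS.comp (tendsto_div_nat_atTop (Nat.pos_of_mem_divisors ht)))
  simp only [mul_one] at h2
  exact Tendsto.congr (fun x => (LS_eq G hG hd hm hdm x).symm) h2

lemma RTendsto_of_S (G : ℕ → ℂ) (hG : IsMult G) {a : ℕ} (ha : 0 < a)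
    (hS : ∀ b : ℕ, 0 < b → STendsto G b 1) :
    _root_.RTendsto G a
      (∑ d ∈ a.divisors, (d : ℂ) * ∑ t ∈ (rad d).divisors, mu t * G (d * t)) := by
  unfold _root_.RTendsto
  have h2 : Tendsto (fun x : ℝ => ∑ d ∈ a.divisors, (d : ℂ) * LS G d (x / (d : ℝ)))
      atTop (nhds (∑ d ∈ a.divisors, (d : ℂ) * ∑ t ∈ (rad d).divisors, mu t * G (d * t))) := by
    refine tendsto_finset_sum _ fun d hd => ?_
    have hd0 : 0 < d := Nat.pos_of_mem_divisors hd
    have hL := LTendsto_of_S G hG hd0 hd0 (fun r h => h) (hS d hd0)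
    exact Tendsto.const_mul _ (hL.comp (tendsto_div_nat_atTop hd0))
  exact Tendsto.congr (fun x => (RS_eq G ha x).symm) h2

/-- The prime-refined version used to pin down `G(p)`. -/
lemma LTendsto_of_S_prime (G : ℕ → ℂ) (hG : IsMult G) {p : ℕ} (hp : p.Prime) (j : ℕ)
    (hS : STendsto G p 1) :
    LTendsto G (p ^ j) (G (p ^ j * 1) - G (p ^ j * p)) := by
  have h := LTendsto_of_S G hG (d := p ^ j) (m := p) (pow_pos hp.pos j) hp.pos
    (fun r h => Nat.Coprime.pow_right j h) hS
  have hrp : rad p = p := by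
    have := rad_prime_pow hp one_pos
    simpa using this
  rw [hrp, hp.divisors] at h
  have hsum : ∑ t ∈ ({1, p} : Finset ℕ), mu t * G (p ^ j * t)
      = G (p ^ j * 1) - G (p ^ j * p) := by
    rw [Finset.sum_insert (by simp [hp.ne_one, Ne.symm hp.ne_one]), Finset.sum_singleton,
      mu_one, mu_prime hp]
    ring
  rwa [hsum] at h

end Limits


section EratosFacts

variable {F : ℕ → ℂ}

/-- `F` as an arithmetic function. -/
noncomputable def Ftilde (F : ℕ → ℂ) : ArithmeticFunction ℂ :=
  ⟨fun n => if n = 0 then 0 else F n, if_pos rfl⟩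

lemma Ftilde_apply {n : ℕ} (hn : n ≠ 0) : Ftilde F n = F n := if_neg hn

lemma Ftilde_mult (hFm : IsMult F) (hF1 : F 1 = 1) : (Ftilde F).IsMultiplicative := by
  constructor
  · rw [Ftilde_apply one_ne_zero]
    exact hF1
  · intro m n hmn
    rcases eq_or_ne m 0 with rfl | hm
    · have hn1 : n = 1 := by simpa using hmn
      subst hn1
      simp [Ftilde, hF1]
    rcases eq_or_ne n 0 with rfl | hn
    · have hm1 : m = 1 := by simpa using hmn
      subst hm1
      simp [Ftilde, hF1]
    rw [Ftilde_apply (Nat.mul_ne_zero hm hn), Ftilde_apply hm, Ftilde_apply hn]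
    exact hFm m n (Nat.pos_of_ne_zero hm) (Nat.pos_of_ne_zero hn) hmn

lemma eratos_eq {n : ℕ} (hn : n ≠ 0) :
    ((Ftilde F * (ArithmeticFunction.moebius : ArithmeticFunction ℂ)) n) = eratos F n := by
  rw [ArithmeticFunction.mul_apply]
  rw [Nat.sum_divisorsAntidiagonal (fun i j => Ftilde F i * (ArithmeticFunction.moebius : ArithmeticFunction ℂ) j)]
  unfold eratos
  refine Finset.sum_congr rfl fun d hd => ?_
  rw [Ftilde_apply (Nat.pos_of_mem_divisors hd).ne']
  congr 1

lemma eratos_mult_AF (hFm : IsMult F) (hF1 : F 1 = 1) :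
    (Ftilde F * (ArithmeticFunction.moebius : ArithmeticFunction ℂ)).IsMultiplicative :=
  (Ftilde_mult hFm hF1).mul (ArithmeticFunction.isMultiplicative_moebius.intCast)

lemma eratos_factorization (hFm : IsMult F) (hF1 : F 1 = 1) {d : ℕ} (hd : d ≠ 0) :
    eratos F d = ∏ p ∈ d.primeFactors, eratos F (p ^ d.factorization p) := by
  rw [← eratos_eq hd,
    ArithmeticFunction.IsMultiplicative.multiplicative_factorization _ (eratos_mult_AF hFm hF1) hd]
  rw [Finsupp.prod]
  refine Finset.prod_congr rfl fun p hp => ?_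
  have hp' : p.Prime := Nat.prime_of_mem_primeFactors hp
  exact eratos_eq (pow_ne_zero _ hp'.ne_zero)

lemma sum_eratos (hFm : IsMult F) {n : ℕ} (hn : 0 < n) :
    ∑ i ∈ n.divisors, eratos F i = F n := by
  have key : ∀ n : ℕ, n > 0 →
      ∑ x ∈ n.divisorsAntidiagonal, (ArithmeticFunction.moebius x.fst : ℤ) • F x.snd
        = eratos F n := by
    intro n hn
    rw [Nat.sum_divisorsAntidiagonal' (fun i j => (ArithmeticFunction.moebius i : ℤ) • F j)]
    unfold eratos
    refine Finset.sum_congr rfl fun d hd => ?_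
    rw [zsmul_eq_mul]
    unfold mu
    push_cast
    ring
  exact (ArithmeticFunction.sum_eq_iff_sum_smul_moebius_eq.2 key) n hn

lemma mu_prod_primes {T : Finset ℕ} (hT : ∀ p ∈ T, p.Prime) :
    mu (∏ p ∈ T, p) = ∏ p ∈ T, (-1 : ℂ) := by
  classical
  induction T using Finset.induction with
  | empty => simpa using mu_one
  | @insert a s ha ih =>
    rw [Finset.prod_insert ha, Finset.prod_insert ha]
    have hap : a.Prime := hT a (Finset.mem_insert_self a s)
    have hcop : Nat.Coprime a (∏ p ∈ s, p) :=
      Nat.Coprime.prod_right fun q hq =>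
        (Nat.coprime_primes hap (hT q (Finset.mem_insert_of_mem hq))).2 (fun h => ha (h ▸ hq))
    rw [mu_mul hcop, mu_prime hap, ih fun p hp => hT p (Finset.mem_insert_of_mem hp)]

lemma factorization_squarefree_eq {t : ℕ} (ht : Squarefree t) (p : ℕ) :
    t.factorization p = if p ∈ t.primeFactors then 1 else 0 := by
  split_ifs with hmem
  · refine le_antisymm (ht.natFactorization_le_one p) ?_
    rw [← Nat.support_factorization, Finsupp.mem_support_iff] at hmem
    omega
  · rwa [← Nat.support_factorization, Finsupp.notMem_support_iff] at hmem

end EratosFacts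


section UCanon

variable {F : ℕ → ℂ}

/-- The per-prime factor of the canonical coefficient. -/
noncomputable def gpf (F : ℕ → ℂ) (p : ℕ) (w : ℕ) : ℂ :=
  1 - ∑ K ∈ Finset.range w, eratos F (p ^ K) / ((p : ℂ) ^ K)

lemma canonCoeff_eq_prod (F : ℕ → ℂ) (q : ℕ) :
    canonCoeff F q = ∏ p ∈ q.primeFactors, gpf F p (q.factorization p) := rfl

/-- Key evaluation: `∑_{t ∣ rad d} μ(t) G_F(dt) = F'(d)/d`. -/
lemma U_canon (hFm : IsMult F) (hF1 : F 1 = 1) {d : ℕ} (hd : 0 < d) :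
    ∑ t ∈ (rad d).divisors, mu t * canonCoeff F (d * t) = eratos F d / (d : ℂ) := by
  classical
  have hR0 : rad d ≠ 0 := (rad_pos d).ne'
  have hRsf : Squarefree (rad d) := squarefree_rad d
  have hPrad : (rad d).primeFactors = d.primeFactors := primeFactors_rad d
  have hradP : rad d = ∏ p ∈ d.primeFactors, p := rfl
  have step1 : ∑ t ∈ (rad d).divisors, mu t * canonCoeff F (d * t)
      = ∑ T ∈ d.primeFactors.powerset,
          (∏ p ∈ T, -(gpf F p (d.factorization p + 1)))
            * ∏ p ∈ d.primeFactors \ T, gpf F p (d.factorization p) := by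
    refine Finset.sum_nbij' (fun t => t.primeFactors) (fun T => ∏ p ∈ T, p) ?_ ?_ ?_ ?_ ?_
    · intro t ht
      rw [Finset.mem_powerset, ← hPrad]
      exact Nat.primeFactors_mono (Nat.mem_divisors.mp ht).1 hR0
    · intro T hT
      rw [Finset.mem_powerset] at hT
      refine Nat.mem_divisors.mpr ⟨?_, hR0⟩
      rw [hradP]
      exact Finset.prod_dvd_prod_of_subset _ _ _ hT
    · intro t ht
      exact Nat.prod_primeFactors_of_squarefree
        (hRsf.squarefree_of_dvd (Nat.mem_divisors.mp ht).1)
    · intro T hT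
      rw [Finset.mem_powerset] at hT
      exact Nat.primeFactors_prod fun p hp => Nat.prime_of_mem_primeFactors (hT hp)
    · intro t ht
      have htdvd : t ∣ rad d := (Nat.mem_divisors.mp ht).1
      have hsft : Squarefree t := hRsf.squarefree_of_dvd htdvd
      have ht0 : t ≠ 0 := hsft.ne_zero
      have hTP : t.primeFactors ⊆ d.primeFactors := by
        rw [← hPrad]
        exact Nat.primeFactors_mono htdvd hR0
      have hprod_t : ∏ p ∈ t.primeFactors, p = t := Nat.prod_primeFactors_of_squarefree hsft
      have hmut : mu t = ∏ p ∈ t.primeFactors, (-1 : ℂ) := by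
        conv_lhs => rw [← hprod_t]
        exact mu_prod_primes fun p hp => Nat.prime_of_mem_primeFactors hp
      have hPmul : (d * t).primeFactors = d.primeFactors := by
        rw [Nat.primeFactors_mul hd.ne' ht0, Finset.union_eq_left.mpr hTP]
      have hcc : canonCoeff F (d * t)
          = (∏ p ∈ d.primeFactors \ t.primeFactors, gpf F p (d.factorization p))
            * ∏ p ∈ t.primeFactors, gpf F p (d.factorization p + 1) := by
        rw [canonCoeff_eq_prod, hPmul, ← Finset.prod_sdiff hTP]
        congr 1
        · refine Finset.prod_congr rfl fun p hp => ?_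
          have hpt : p ∉ t.primeFactors := (Finset.mem_sdiff.mp hp).2
          rw [Nat.factorization_mul hd.ne' ht0, Finsupp.add_apply,
            factorization_squarefree_eq hsft p, if_neg hpt, add_zero]
        · refine Finset.prod_congr rfl fun p hp => ?_
          rw [Nat.factorization_mul hd.ne' ht0, Finsupp.add_apply,
            factorization_squarefree_eq hsft p, if_pos hp]
      rw [hmut, hcc, ← mul_assoc]
      rw [mul_comm (∏ p ∈ t.primeFactors, (-1 : ℂ))
        (∏ p ∈ d.primeFactors \ t.primeFactors, gpf F p (d.factorization p)), mul_assoc,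
        ← Finset.prod_mul_distrib]
      rw [mul_comm]
      congr 1
      refine Finset.prod_congr rfl fun p hp => ?_
      rw [neg_one_mul]
  rw [step1, ← Finset.prod_add]
  have step3 : ∏ p ∈ d.primeFactors,
      (-(gpf F p (d.factorization p + 1)) + gpf F p (d.factorization p))
      = ∏ p ∈ d.primeFactors, eratos F (p ^ d.factorization p) / ((p : ℂ) ^ d.factorization p) := by
    refine Finset.prod_congr rfl fun p hp => ?_
    rw [neg_add_eq_sub]
    unfold gpf
    rw [Finset.sum_range_succ]
    ring
  rw [step3, Finset.prod_div_distrib, ← eratos_factorization hFm hF1 hd.ne']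
  congr 1
  have h1 : ∏ p ∈ d.primeFactors, p ^ d.factorization p = d :=
    Nat.factorization_prod_pow_eq_self hd.ne'
  exact_mod_cast h1

end UCanon


section Uniqueness

lemma IsMult.total {G : ℕ → ℂ} (hGm : IsMult G) (hG1 : G 1 = 1) :
    ∀ x y : ℕ, Nat.Coprime x y → G (x * y) = G x * G y := by
  intro x y h
  rcases eq_or_ne x 0 with rfl | hx
  · have hy1 : y = 1 := by simpa using h
    subst hy1
    rw [mul_one, hG1, mul_one]
  rcases eq_or_ne y 0 with rfl | hy
  · have hx1 : x = 1 := by simpa using h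
    subst hx1
    rw [one_mul, hG1, one_mul]
  exact hGm x y (Nat.pos_of_ne_zero hx) (Nat.pos_of_ne_zero hy) h

lemma mu_prime_pow_zero {p : ℕ} (hp : p.Prime) {e : ℕ} (he : 2 ≤ e) : mu (p ^ e) = 0 := by
  apply mu_zero_of_not_squarefree
  intro hs
  refine hp.not_isUnit (hs p ?_)
  have h2 : p ^ 2 ∣ p ^ e := pow_dvd_pow p he
  rwa [sq] at h2

lemma eratos_prime_pow {F : ℕ → ℂ} {p : ℕ} (hp : p.Prime) (v : ℕ) :
    eratos F (p ^ (v + 1)) = F (p ^ (v + 1)) - F (p ^ v) := by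
  unfold eratos
  rw [Nat.sum_divisors_prime_pow hp]
  have hcongr : ∀ i ∈ Finset.range (v + 1 + 1),
      F (p ^ i) * mu (p ^ (v + 1) / p ^ i) = F (p ^ i) * mu (p ^ (v + 1 - i)) := by
    intro i hi
    rw [Finset.mem_range] at hi
    rw [Nat.pow_div (by omega) hp.pos]
  rw [Finset.sum_congr rfl hcongr, Finset.sum_range_succ, Finset.sum_range_succ]
  have hz : ∑ i ∈ Finset.range v, F (p ^ i) * mu (p ^ (v + 1 - i)) = 0 := by
    refine Finset.sum_eq_zero fun i hi => ?_
    rw [Finset.mem_range] at hi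
    rw [mu_prime_pow_zero hp (by omega), mul_zero]
  rw [hz, show v + 1 - v = 1 by omega, pow_one, mu_prime hp, Nat.sub_self, pow_zero, mu_one]
  ring

lemma LTendsto_one_of_R {G : ℕ → ℂ} {L : ℂ} (hR : _root_.RTendsto G 1 L) :
    LTendsto G 1 L := by
  unfold LTendsto
  refine Tendsto.congr (fun x => ?_) hR
  rw [RS_eq G one_pos x]
  simp [Nat.divisors_one, div_one]

lemma G_one_eq {G : ℕ → ℂ} (hGm : IsMult G) (hSG : ∀ a : ℕ, 0 < a → STendsto G a 1) :
    G 1 = 1 := by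
  have hsq := hGm 1 1 one_pos one_pos (Nat.coprime_one_left 1)
  rw [mul_one] at hsq
  by_contra h1
  have hG10 : G 1 = 0 := by
    have : G 1 * (G 1 - 1) = 0 := by rw [mul_sub, ← hsq]; ring
    rcases mul_eq_zero.mp this with h | h
    · exact h
    · exact absurd (by linear_combination h : G 1 = 1) h1
  have hz : ∀ r : ℕ, 0 < r → G r = 0 := by
    intro r hr
    have h := hGm r 1 hr one_pos (Nat.coprime_one_right r)
    rw [mul_one] at h
    rw [h, hG10, mul_zero]
  have hzero : STendsto G 1 0 := by
    unfold STendsto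
    refine Tendsto.congr (fun x => ?_) tendsto_const_nhds
    unfold SS
    symm
    refine Finset.sum_eq_zero fun r hr => ?_
    rw [hz r (Finset.mem_Icc.mp (Finset.mem_filter.mp hr).1).1, zero_mul]
  exact one_ne_zero (tendsto_nhds_unique (hSG 1 one_pos) hzero)

lemma uniq_prime_pow {F G : ℕ → ℂ} (hF1 : F 1 = 1) (hGm : IsMult G) (hG1 : G 1 = 1)
    (hRG : ∀ a : ℕ, 0 < a → _root_.RTendsto G a (F a))
    (hSG : ∀ a : ℕ, 0 < a → STendsto G a 1)
    {p : ℕ} (hp : p.Prime) : ∀ v : ℕ, G (p ^ v) = canonCoeff F (p ^ v) := by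
  -- Lucht limits at prime powers
  have hLj : ∀ j : ℕ, LTendsto G (p ^ j) (G (p ^ j) - G (p ^ j * p)) := by
    intro j
    have h := LTendsto_of_S_prime G hGm hp j (hSG p hp.pos)
    rwa [mul_one] at h
  -- G p = 0
  have hGp : G p = 0 := by
    have h1 : LTendsto G 1 (F 1) := LTendsto_one_of_R (hRG 1 one_pos)
    have h2 := hLj 0
    rw [pow_zero, one_mul, hG1] at h2
    have := tendsto_nhds_unique h1 h2
    rw [hF1] at this
    linear_combination this
  -- the master relation at p^v
  have hval : ∀ v : ℕ,
      (∑ d ∈ (p ^ v).divisors, (d : ℂ) * (G d - G (d * p))) = F (p ^ v) := by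
    intro v
    have hpv : 0 < p ^ v := pow_pos hp.pos v
    have hstep : Tendsto (fun x : ℝ => RS G (p ^ v) x) atTop
        (nhds (∑ d ∈ (p ^ v).divisors, (d : ℂ) * (G d - G (d * p)))) := by
      have h2 : Tendsto (fun x : ℝ => ∑ d ∈ (p ^ v).divisors, (d : ℂ) * LS G d (x / (d : ℝ)))
          atTop (nhds (∑ d ∈ (p ^ v).divisors, (d : ℂ) * (G d - G (d * p)))) := by
        refine tendsto_finset_sum _ fun d hd => ?_
        obtain ⟨j, hjle, rfl⟩ := (Nat.dvd_prime_pow hp).1 (Nat.mem_divisors.mp hd).1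
        exact Tendsto.const_mul _ ((hLj j).comp (tendsto_div_nat_atTop (pow_pos hp.pos j)))
      exact Tendsto.congr (fun x => (RS_eq G hpv x).symm) h2
    exact tendsto_nhds_unique hstep (hRG (p ^ v) hpv)
  -- rewrite as sums over range
  have hval' : ∀ v : ℕ,
      (∑ j ∈ Finset.range (v + 1), ((p : ℂ) ^ j) * (G (p ^ j) - G (p ^ j * p))) = F (p ^ v) := by
    intro v
    rw [← hval v, Nat.sum_divisors_prime_pow hp]
    refine Finset.sum_congr rfl fun j hj => ?_
    push_cast
    ring
  -- recursion
  have hrec : ∀ v : ℕ, ((p : ℂ) ^ (v + 1)) * (G (p ^ (v + 1)) - G (p ^ (v + 1) * p))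
      = eratos F (p ^ (v + 1)) := by
    intro v
    have h1 := hval' (v + 1)
    rw [Finset.sum_range_succ, hval' v] at h1
    rw [eratos_prime_pow hp v]
    linear_combination h1
  -- conclude by induction
  have hpC : ((p : ℂ)) ≠ 0 := Nat.cast_ne_zero.mpr hp.pos.ne'
  have main : ∀ v : ℕ, G (p ^ (v + 1)) = canonCoeff F (p ^ (v + 1)) := by
    intro v
    induction v with
    | zero =>
      simp only [zero_add]
      rw [canonCoeff_prime_pow hp one_pos, Finset.sum_range_one, pow_zero, pow_zero,
        eratos_one, hF1, pow_one, hGp]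
      norm_num
    | succ w ih =>
      have h1 := hrec w
      have hppow : ((p : ℂ) ^ (w + 1)) ≠ 0 := pow_ne_zero _ hpC
      have hG2 : G (p ^ (w + 1) * p) = G (p ^ (w + 1)) - eratos F (p ^ (w + 1)) / (p : ℂ) ^ (w + 1) := by
        field_simp at h1 ⊢
        linear_combination -h1
      rw [← pow_succ] at hG2
      rw [hG2, ih, canonCoeff_prime_pow hp (Nat.succ_pos w),
        canonCoeff_prime_pow hp (Nat.succ_pos (w + 1)),
        Finset.sum_range_succ (fun x => eratos F (p ^ x) / (p : ℂ) ^ x) (w + 1)]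
      ring
  intro v
  match v with
  | 0 => rw [pow_zero, hG1, canonCoeff_one]
  | (w + 1) => exact main w

end Uniqueness

/-- The canonical Ramanujan coefficient of a non-null multiplicative `F` gives a finite
pure Ramanujan expansion of `F` with coprime series constantly `1`, and it is the unique
such multiplicative coefficient (Theorem 5.1). -/
theorem stmt_8 (F : ℕ → ℂ) (hFmult : IsMult F) (hF : ∃ a : ℕ, 0 < a ∧ F a ≠ 0) :
    IsMult (canonCoeff F) ∧
    (∀ a : ℕ, 0 < a → RTendsto (canonCoeff F) a (F a)) ∧
    (∀ a : ℕ, 0 < a →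
      (∑ d ∈ (a * rad a).divisors, canonCoeff F d * cR d a) = F a) ∧
    (∀ a : ℕ, 0 < a → STendsto (canonCoeff F) a 1) ∧
    (∀ G : ℕ → ℂ, IsMult G → (∀ a : ℕ, 0 < a → RTendsto G a (F a)) →
      (∀ a : ℕ, 0 < a → STendsto G a 1) → ∀ n : ℕ, 0 < n → G n = canonCoeff F n) := by
  have hF1 : F 1 = 1 := F_one hFmult hF
  have hGm := canonCoeff_mult F
  have hS : ∀ a : ℕ, 0 < a → STendsto (canonCoeff F) a 1 := fun a _ => STendsto_canon hF1 a
  have hR : ∀ a : ℕ, 0 < a → _root_.RTendsto (canonCoeff F) a (F a) := by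
    intro a ha
    have h := RTendsto_of_S (canonCoeff F) hGm ha hS
    have heval : (∑ d ∈ a.divisors,
        (d : ℂ) * ∑ t ∈ (rad d).divisors, mu t * canonCoeff F (d * t)) = F a := by
      have h1 : ∀ d ∈ a.divisors,
          (d : ℂ) * ∑ t ∈ (rad d).divisors, mu t * canonCoeff F (d * t) = eratos F d := by
        intro d hd
        rw [U_canon hFmult hF1 (Nat.pos_of_mem_divisors hd), mul_comm,
          div_mul_cancel₀ _ (Nat.cast_ne_zero.mpr (Nat.pos_of_mem_divisors hd).ne')]
      rw [Finset.sum_congr rfl h1]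
      exact sum_eratos hFmult ha
    rwa [heval] at h
  refine ⟨hGm, hR, ?_, fun a _ => STendsto_canon hF1 a, ?_⟩
  · intro a ha
    exact tendsto_nhds_unique (RTendsto_canon_EG hF1 ha) (hR a ha)
  · intro G hGm' hRG hSG n hn
    have hG1 : G 1 = 1 := G_one_eq hGm' hSG
    have hGt := IsMult.total hGm' hG1
    have hCt := IsMult.total (canonCoeff_mult F) (canonCoeff_one F)
    rw [Nat.multiplicative_factorization G hGt hG1 hn.ne',
      Nat.multiplicative_factorization (canonCoeff F) hCt (canonCoeff_one F) hn.ne']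
    refine Finsupp.prod_congr fun p hp => ?_
    have hpp : p.Prime := Nat.prime_of_mem_primeFactors hp
    exact uniq_prime_pow hF1 hGm' hG1 hRG hSG hpp _
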